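/- Let Q_1, ..., Q_n be vectors in ℝ^k and let I be a nonempty subset of {1,...,n}. Let S_I be the linear span of {Q_j : j ∈ I} and let Δ_I ⊆ S_I be the cone of linear combinations of {Q_j : j ∈ I} with nonnegative coefficients. Then a vector σ ∈ ℝ^k lies in the interior of Δ_I (as a subset of the topological space S_I) if and only if σ can be written as σ = Σ_{j∈I} λ^j Q_j with all coefficients λ^j strictly positive. -/

import Mathlib

/-- σ lies in the interior of the cone Δ_I (as a subset of the span S_I
of {Q_j : j ∈ I}, with its subspace topology) iff σ is a strictly positive linear
combination of the Q_j, j ∈ I. -/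
theorem stmt_0 {k n : ℕ} (Q : Fin n → EuclideanSpace ℝ (Fin k))
    (I : Finset (Fin n)) (hI : I.Nonempty)
    (S : Submodule ℝ (EuclideanSpace ℝ (Fin k)))
    (hS : S = Submodule.span ℝ (Q '' (I : Set (Fin n))))
    (Δ : Set (EuclideanSpace ℝ (Fin k)))
    (hΔ : Δ = {x | ∃ lam : Fin n → ℝ, (∀ j ∈ I, 0 ≤ lam j) ∧ x = ∑ j ∈ I, lam j • Q j})
    (σ : EuclideanSpace ℝ (Fin k)) :
    (∃ hσ : σ ∈ S, (⟨σ, hσ⟩ : S) ∈ interior ((Subtype.val : S → EuclideanSpace ℝ (Fin k)) ⁻¹' Δ)) ↔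
      ∃ lam : Fin n → ℝ, (∀ j ∈ I, 0 < lam j) ∧ σ = ∑ j ∈ I, lam j • Q j := by
  classical
  have hQmem : ∀ j ∈ I, Q j ∈ S := fun j hj => hS ▸ Submodule.subset_span ⟨j, hj, rfl⟩
  set q : {x // x ∈ I} → S := fun j => ⟨Q (j : Fin n), hQmem j j.2⟩ with hq
  set L : (Fin n → ℝ) →ₗ[ℝ] S :=
    { toFun := fun lam => ∑ j ∈ I.attach, lam (j : Fin n) • q j
      map_add' := by
        intro x y
        simp [add_smul, Finset.sum_add_distrib]
      map_smul' := by
        intro c x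
        simp [smul_smul, Finset.smul_sum] } with hL
  have hLcoe : ∀ x : Fin n → ℝ, ((L x : S) : EuclideanSpace ℝ (Fin k))
      = ∑ j ∈ I, x j • Q j := by
    intro x
    have : ((L x : S) : EuclideanSpace ℝ (Fin k))
        = ∑ j ∈ I.attach, x (j : Fin n) • Q (j : Fin n) := by
      simp [hL, hq]
    rw [this, Finset.sum_attach I (fun j => x j • Q j)]
  have hLsurj : Function.Surjective L := by
    intro s
    have himg : Q '' (I : Set (Fin n))
        = Set.range (fun j : {x // x ∈ I} => Q (j : Fin n)) := by
      ext y; simp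
    have hs : (s : EuclideanSpace ℝ (Fin k)) ∈ Submodule.span ℝ
        (Set.range (fun j : {x // x ∈ I} => Q (j : Fin n))) := by
      rw [← himg]
      exact hS ▸ s.2
    rw [Submodule.mem_span_range_iff_exists_fun] at hs
    obtain ⟨c, hc⟩ := hs
    refine ⟨fun j => if h : j ∈ I then c ⟨j, h⟩ else 0, ?_⟩
    apply Subtype.ext
    rw [hLcoe, ← hc,
      ← Finset.sum_attach I (fun j => (if h : j ∈ I then c ⟨j, h⟩ else 0) • Q j),
      Finset.univ_eq_attach]
    apply Finset.sum_congr rfl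
    intro j _
    simp [j.2]
  have hLcont : Continuous L := L.continuous_of_finiteDimensional
  haveI : CompleteSpace S := FiniteDimensional.complete ℝ S
  have hLopen : IsOpenMap L := by
    have := ContinuousLinearMap.isOpenMap (𝕜 := ℝ)
      ⟨L, hLcont⟩ hLsurj
    exact this
  constructor
  · rintro ⟨hσ, hint⟩
    rw [mem_interior_iff_mem_nhds, Metric.mem_nhds_iff] at hint
    obtain ⟨ε, hε, hball⟩ := hint
    set c : S := ∑ j ∈ I.attach, q j with hc
    have hcpos : (0:ℝ) < ‖c‖ + 1 := by positivity
    set t : ℝ := ε / (‖c‖ + 1) with ht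
    have htpos : 0 < t := by positivity
    have hpt : (⟨σ, hσ⟩ : S) - t • c ∈ Metric.ball (⟨σ, hσ⟩ : S) ε := by
      rw [Metric.mem_ball, dist_eq_norm]
      have : (⟨σ, hσ⟩ : S) - t • c - (⟨σ, hσ⟩ : S) = -(t • c) := by abel
      rw [this, norm_neg, norm_smul, Real.norm_eq_abs, abs_of_pos htpos]
      calc t * ‖c‖ < t * (‖c‖ + 1) := by
            exact mul_lt_mul_of_pos_left (by linarith) htpos
        _ = ε := by rw [ht, div_mul_cancel₀ _ hcpos.ne']
    have hmem := hball hpt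
    rw [Set.mem_preimage, hΔ] at hmem
    obtain ⟨lam, hlam0, hlameq⟩ := hmem
    have hcoe : (((⟨σ, hσ⟩ : S) - t • c : S) : EuclideanSpace ℝ (Fin k))
        = σ - t • ∑ j ∈ I, Q j := by
      have : ((c : S) : EuclideanSpace ℝ (Fin k)) = ∑ j ∈ I, Q j := by
        rw [hc]
        push_cast
        rw [Finset.sum_attach I (fun j => Q j)]
      simp [this]
    rw [hcoe] at hlameq
    refine ⟨fun j => lam j + t, fun j hj => ?_, ?_⟩
    · have := hlam0 j hj
      show 0 < lam j + t
      linarith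
    have : σ = (∑ j ∈ I, lam j • Q j) + t • ∑ j ∈ I, Q j := by
      have := hlameq
      rw [sub_eq_iff_eq_add] at this
      linear_combination (norm := module) this
    rw [this, Finset.smul_sum, ← Finset.sum_add_distrib]
    apply Finset.sum_congr rfl
    intro j _
    rw [add_smul]
  · rintro ⟨lam, hpos, heq⟩
    have hσS : σ ∈ S := by
      rw [heq]
      exact Submodule.sum_mem S (fun j hj => Submodule.smul_mem S _ (hQmem j hj))
    refine ⟨hσS, ?_⟩
    rw [mem_interior]
    refine ⟨L '' {x | ∀ j ∈ I, 0 < x j}, ?_, ?_, ?_⟩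
    · rintro y ⟨x, hx, rfl⟩
      rw [Set.mem_preimage, hΔ]
      exact ⟨x, fun j hj => (hx j hj).le, (hLcoe x)⟩
    · apply hLopen
      have : {x : Fin n → ℝ | ∀ j ∈ I, 0 < x j} = ⋂ j ∈ I, {x | 0 < x j} := by
        ext x; simp
      rw [this]
      exact isOpen_biInter_finset fun j _ =>
        isOpen_Ioi.preimage (continuous_apply j)
    · exact ⟨lam, hpos, Subtype.ext (by rw [hLcoe]; exact heq.symm)⟩
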